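/- arXiv:1705.06893 — 3 statements merged into one kernel-verified Lean document; each statement's English description precedes it below -/
import Mathlib

section
/- Let X be a locally convex Hausdorff topological vector space and D ⊆ X a nonempty generalized polyhedral convex set, i.e., D = {x ∈ X : Ax = z, ⟨x_i*, x⟩ ≤ α_i, i = 1,…,p} for a continuous surjective linear map A onto a locally convex Hausdorff space Z, z ∈ Z, x_i* ∈ X*, α_i ∈ ℝ. Then there exists a closed linear subspace X_1 of X containing D such that D is a polyhedral convex set in X_1, i.e., D is definable in X_1 by finitely many continuous linear inequalities (and no affine-subspace constraint). -/
/-- Every nonempty generalized polyhedral convex set `D` is contained in a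
closed linear subspace `X₁` in which `D` is a polyhedral convex set. -/
theorem gpcs_is_pcs_in_closed_subspace
    {X Z : Type*} [AddCommGroup X] [Module ℝ X] [TopologicalSpace X]
    [IsTopologicalAddGroup X] [ContinuousSMul ℝ X] [LocallyConvexSpace ℝ X] [T2Space X]
    [AddCommGroup Z] [Module ℝ Z] [TopologicalSpace Z]
    [IsTopologicalAddGroup Z] [ContinuousSMul ℝ Z] [LocallyConvexSpace ℝ Z] [T2Space Z]
    (A : X →L[ℝ] Z) (hA : Function.Surjective A) (z : Z)
    (p : ℕ) (φ : Fin p → X →L[ℝ] ℝ) (α : Fin p → ℝ)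
    (D : Set X) (hD : D = {x : X | A x = z ∧ ∀ i, φ i x ≤ α i})
    (hne : D.Nonempty) :
    ∃ X₁ : Submodule ℝ X, IsClosed (X₁ : Set X) ∧ D ⊆ (X₁ : Set X) ∧
      ∃ (n : ℕ) (g : Fin n → X₁ →L[ℝ] ℝ) (β : Fin n → ℝ),
        D = Subtype.val '' {x : X₁ | ∀ i, g i x ≤ β i} := by
  classical
  -- `X₁` is the preimage of the line through `z`
  set L : Submodule ℝ Z := Submodule.span ℝ {z} with hL
  set X₁ : Submodule ℝ X := L.comap (A : X →ₗ[ℝ] Z) with hX₁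
  have hmem : ∀ x : X, x ∈ X₁ ↔ ∃ t : ℝ, A x = t • z := by
    intro x
    simp only [hX₁, Submodule.mem_comap, ContinuousLinearMap.coe_coe, hL,
      Submodule.mem_span_singleton]
    exact ⟨fun ⟨t, ht⟩ => ⟨t, ht.symm⟩, fun ⟨t, ht⟩ => ⟨t, ht.symm⟩⟩
  have hclosed : IsClosed (X₁ : Set X) := by
    have : (X₁ : Set X) = A ⁻¹' (L : Set Z) := rfl
    rw [this]
    exact (L.closed_of_finiteDimensional).preimage A.continuous
  have hDsub : D ⊆ (X₁ : Set X) := by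
    intro x hx
    rw [hD] at hx
    exact (hmem x).2 ⟨1, by rw [hx.1, one_smul]⟩
  -- get a continuous functional `ψ` with `ψ (A x) = ψ z → A x = z` on `X₁`
  obtain ⟨ψ, hψ⟩ : ∃ ψ : Z →L[ℝ] ℝ, ∀ x : X, x ∈ X₁ → ψ (A x) = ψ z → A x = z := by
    rcases eq_or_ne z 0 with hz | hz
    · refine ⟨0, fun x hx _ => ?_⟩
      rcases (hmem x).1 hx with ⟨t, ht⟩
      rw [ht, hz, smul_zero]
    · obtain ⟨ψ, hψ1⟩ := SeparatingDual.exists_eq_one (R := ℝ) hz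
      refine ⟨ψ, fun x hx h1 => ?_⟩
      rcases (hmem x).1 hx with ⟨t, ht⟩
      rw [ht] at h1 ⊢
      rw [map_smul, hψ1, smul_eq_mul, mul_one] at h1
      rw [h1, one_smul]
  set f : X₁ →L[ℝ] ℝ := ψ.comp (A.comp X₁.subtypeL) with hf
  set g : Fin (p + 2) → X₁ →L[ℝ] ℝ := fun i =>
    if h : (i : ℕ) < p then (φ ⟨i, h⟩).comp X₁.subtypeL
    else if (i : ℕ) = p then f else -f with hg
  set β : Fin (p + 2) → ℝ := fun i =>
    if h : (i : ℕ) < p then α ⟨i, h⟩ else if (i : ℕ) = p then ψ z else -(ψ z) with hβ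
  refine ⟨X₁, hclosed, hDsub, p + 2, g, β, ?_⟩
  ext x
  simp only [Set.mem_image, Set.mem_setOf_eq]
  constructor
  · intro hx
    have hx₁ : x ∈ X₁ := hDsub hx
    rw [hD] at hx
    refine ⟨⟨x, hx₁⟩, fun i => ?_, rfl⟩
    by_cases h : (i : ℕ) < p
    · simp only [hg, hβ, dif_pos h]
      exact hx.2 ⟨i, h⟩
    · by_cases h' : (i : ℕ) = p
      · simp only [hg, hβ, dif_neg h, if_pos h', hf]
        simp [hx.1]
      · simp only [hg, hβ, dif_neg h, if_neg h', hf]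
        simp [hx.1]
  · rintro ⟨⟨y, hy₁⟩, hy, rfl⟩
    rw [hD]
    have h1 : f ⟨y, hy₁⟩ ≤ ψ z := by
      have := hy ⟨p, by omega⟩
      simpa [hg, hβ] using this
    have h2 : -(f ⟨y, hy₁⟩) ≤ -(ψ z) := by
      have := hy ⟨p + 1, by omega⟩
      simpa [hg, hβ] using this
    have hfy : f ⟨y, hy₁⟩ = ψ z := le_antisymm h1 (by linarith)
    have hAy : A y = z := hψ y hy₁ (by simpa [hf] using hfy)
    refine ⟨hAy, fun i => ?_⟩
    have := hy ⟨i, by omega⟩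
    simpa [hg, hβ, i.isLt] using this
end

section
/- Let X, Y be real vector spaces, K ⊆ Y a convex cone containing 0, D ⊆ X convex, f : X → Y a K-function on D, and ℓ(K) = K ∩ (−K). Suppose u, u' ∈ D, w, w' ∈ K, and every point of the segment [f(u)+w, f(u')+w'] lies in E(f(D)+K | K). Then every point of the segment [u, u'] is an efficient solution, i.e., for each λ ∈ [0,1] and u_λ = (1−λ)u + λu', there is no x ∈ D with f(u_λ) − f(x) ∈ K \ ℓ(K). -/
open Pointwise

private lemma kadd {Y : Type*} [AddCommGroup Y] [Module ℝ Y]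
    {K : Set Y} (hconv : Convex ℝ K) (hcone : ∀ t : ℝ, 0 < t → t • K ⊆ K)
    {a b : Y} (ha : a ∈ K) (hb : b ∈ K) : a + b ∈ K := by
  have hmid : (1/2 : ℝ) • a + (1/2 : ℝ) • b ∈ K :=
    hconv ha hb (by norm_num) (by norm_num) (by norm_num)
  have : (2:ℝ) • ((1/2 : ℝ) • a + (1/2 : ℝ) • b) ∈ K :=
    hcone 2 (by norm_num) ⟨_, hmid, rfl⟩
  have he : (2:ℝ) • ((1/2 : ℝ) • a + (1/2 : ℝ) • b) = a + b := by
    rw [smul_add, smul_smul, smul_smul]; norm_num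
  rwa [he] at this

/-- If the segment `[f(u)+w, f(u')+w']` lies in `E(f(D)+K | K)`, then every
point of `[u, u']` is an efficient solution. -/
theorem segment_efficient_solutions
    {X Y : Type*} [AddCommGroup X] [Module ℝ X] [AddCommGroup Y] [Module ℝ Y]
    (K : Set Y) (hconv : Convex ℝ K) (hcone : ∀ t : ℝ, 0 < t → t • K ⊆ K)
    (h0 : (0 : Y) ∈ K)
    (D : Set X) (hD : Convex ℝ D) (f : X → Y)
    (hf : ∀ x₁ ∈ D, ∀ x₂ ∈ D, ∀ l ∈ Set.Icc (0:ℝ) 1,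
      (1 - l) • f x₁ + l • f x₂ - f ((1 - l) • x₁ + l • x₂) ∈ K)
    (u u' : X) (hu : u ∈ D) (hu' : u' ∈ D)
    (w w' : Y) (hw : w ∈ K) (hw' : w' ∈ K)
    (hseg : segment ℝ (f u + w) (f u' + w') ⊆
      {y ∈ f '' D + K | ∀ y' ∈ f '' D + K, y - y' ∉ K \ (K ∩ -K)}) :
    ∀ l ∈ Set.Icc (0:ℝ) 1, ∀ x ∈ D,
      f ((1 - l) • u + l • u') - f x ∉ K \ (K ∩ -K) := by
  intro l hl x hx ⟨haK, haL⟩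
  set ul := (1 - l) • u + l • u' with hul
  set y := (1 - l) • (f u + w) + l • (f u' + w') with hy
  have hyseg : y ∈ segment ℝ (f u + w) (f u' + w') :=
    ⟨1 - l, l, by linarith [hl.2], hl.1, by ring, rfl⟩
  have hy2 := (hseg hyseg).2
  -- k := y - f ul ∈ K
  have hk1 : (1 - l) • f u + l • f u' - f ul ∈ K := hf u hu u' hu' l hl
  have hk2 : (1 - l) • w + l • w' ∈ K :=
    hconv hw hw' (by linarith [hl.2]) hl.1 (by ring)
  have hk : y - f ul ∈ K := by
    have := kadd hconv hcone hk1 hk2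
    have he : (1 - l) • f u + l • f u' - f ul + ((1 - l) • w + l • w') = y - f ul := by
      rw [hy]; rw [smul_add, smul_add]; abel
    rwa [he] at this
  -- y' := f x + 0 ∈ f '' D + K
  have hy' : f x + 0 ∈ f '' D + K := Set.add_mem_add ⟨x, hx, rfl⟩ h0
  apply hy2 (f x + 0) hy'
  have hdiff : y - (f x + 0) = (f ul - f x) + (y - f ul) := by abel
  constructor
  · rw [hdiff]; exact kadd hconv hcone haK hk
  · rintro ⟨h1, h2⟩
    apply haL
    refine ⟨haK, ?_⟩
    have hneg : -(y - (f x + 0)) ∈ K := h2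
    have : -(y - (f x + 0)) + (y - f ul) ∈ K := kadd hconv hcone hneg hk
    have he2 : -(y - (f x + 0)) + (y - f ul) = -(f ul - f x) := by abel
    rw [he2] at this
    exact this
end

section
/- Let X, Y be locally convex Hausdorff topological vector spaces, P₁ = {x : ⟨x₂*, x⟩ ≥ 0}, P₂ = {x : ⟨x₂*, x⟩ ≤ 0} for a continuous linear functional x₂* on X = Y, T : X → X a continuous linear map with ker T = ker x₂* and range spanned by a vector e₁ with x₂*(e₁) = 0, specifically Tx = ⟨x₂*, x⟩ e₁. Define f(x) = x − Tx on P₁ and f(x) = x + Tx on P₂, and let K = {y : ⟨x₁*, y⟩ ≤ 0, ⟨x₂*, y⟩ ≤ 0} where x₁* is a continuous linear functional with x₁*(e₁) = 1 and x₂*(e₁) = 0. Then f is a K-function on X (i.e., (1−λ)f(x₁) + λf(x₂) − f((1−λ)x₁+λx₂) ∈ K for all x₁, x₂ ∈ X, λ ∈ [0,1]). -/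
/-- The piecewise linear map `f(x) = x - ⟨x₂*,x⟩e₁` on `{⟨x₂*,x⟩ ≥ 0}` and
`f(x) = x + ⟨x₂*,x⟩e₁` on `{⟨x₂*,x⟩ ≤ 0}` is a `K`-function on `X`, where
`K = {y : ⟨x₁*,y⟩ ≤ 0, ⟨x₂*,y⟩ ≤ 0}`. -/
theorem piecewise_map_K_function
    {X : Type*} [AddCommGroup X] [Module ℝ X] [TopologicalSpace X]
    [IsTopologicalAddGroup X] [ContinuousSMul ℝ X] [LocallyConvexSpace ℝ X] [T2Space X]
    (x₁ x₂ : X →L[ℝ] ℝ) (e₁ : X) (h₁ : x₁ e₁ = 1) (h₂ : x₂ e₁ = 0)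
    (f : X → X)
    (hfP₁ : ∀ x : X, 0 ≤ x₂ x → f x = x - (x₂ x) • e₁)
    (hfP₂ : ∀ x : X, x₂ x ≤ 0 → f x = x + (x₂ x) • e₁) :
    ∀ a b : X, ∀ l ∈ Set.Icc (0:ℝ) 1,
      (1 - l) • f a + l • f b - f ((1 - l) • a + l • b) ∈
        {y : X | x₁ y ≤ 0 ∧ x₂ y ≤ 0} := by
  have hf : ∀ x : X, f x = x - |x₂ x| • e₁ := by
    intro x
    rcases le_total 0 (x₂ x) with h | h
    · rw [hfP₁ x h, abs_of_nonneg h]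
    · rw [hfP₂ x h, abs_of_nonpos h, neg_smul, sub_neg_eq_add]
  rintro a b l ⟨hl0, hl1⟩
  set c : X := (1 - l) • a + l • b with hcdef
  have hc : x₂ c = (1 - l) * x₂ a + l * x₂ b := by
    simp [hcdef]
  have key : (1 - l) • f a + l • f b - f c
      = (|x₂ c| - ((1 - l) * |x₂ a| + l * |x₂ b|)) • e₁ := by
    rw [hf a, hf b, hf c, hcdef]
    module
  have habs : |x₂ c| ≤ (1 - l) * |x₂ a| + l * |x₂ b| := by
    rw [hc]
    calc |(1 - l) * x₂ a + l * x₂ b| ≤ |(1 - l) * x₂ a| + |l * x₂ b| := abs_add_le _ _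
    _ = (1 - l) * |x₂ a| + l * |x₂ b| := by
        rw [abs_mul, abs_mul, abs_of_nonneg (by linarith), abs_of_nonneg hl0]
  rw [key]
  constructor
  · simp only [map_smul, smul_eq_mul, h₁, mul_one]
    linarith
  · simp only [map_smul, smul_eq_mul, h₂, mul_zero, le_refl]
end
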